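/- Let p > 0 and N ≥ 2. Define F on the open set U = {x ∈ ℝ^N : x₁ < x₂ < ⋯ < x_N} by F(x) = Σᵢ₌₁^N log rᵢᵖ(x), where rᵢᵖ(x) = min_p(Δxᵢ, Δxᵢ₊₁) for 2 ≤ i ≤ N−1, r₁ᵖ(x) = 2^{1/p} Δx₂ and r_Nᵖ(x) = 2^{1/p} Δx_N, with Δxᵢ = xᵢ − xᵢ₋₁. Then F is differentiable on U and for every x ∈ U, Σᵢ₌₁^N xᵢ · (∂F/∂xᵢ)(x) = N. -/

import Mathlib

open Real Finset

/-- `rᵢᵖ = min_p(Δxᵢ, Δxᵢ₊₁) = ((Δxᵢ^{−p} + Δxᵢ₊₁^{−p})/2)^{−1/p}`, with the boundary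
convention `r₁ᵖ = 2^{1/p} Δx₂` and `r_Nᵖ = 2^{1/p} Δx_N`, for `N = n + 2` particles
indexed from `0` to `n+1`. -/
noncomputable def rballp (p : ℝ) (n : ℕ) (x : Fin (n + 2) → ℝ) (i : Fin (n + 2)) : ℝ :=
  if i.val = 0 then (2 : ℝ) ^ (1 / p) * (x 1 - x 0)
  else if i.val = n + 1 then (2 : ℝ) ^ (1 / p) * (x i - x (i - 1))
  else (((x i - x (i - 1)) ^ (-p) + (x (i + 1) - x i) ^ (-p)) / 2) ^ (-1 / p)

/-- `F(x) = Σᵢ log rᵢᵖ(x)`. -/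
noncomputable def logRadiiSum (p : ℝ) (n : ℕ) (x : Fin (n + 2) → ℝ) : ℝ :=
  ∑ i, Real.log (rballp p n x i)

section aux
variable {p : ℝ} {n : ℕ}

lemma diff_pos_sub_one {x : Fin (n + 2) → ℝ} (hx : StrictMono x) {i : Fin (n + 2)}
    (hi : i.val ≠ 0) : 0 < x i - x (i - 1) := by
  have : i - 1 < i := by
    rw [Fin.lt_def, Fin.coe_sub_one, if_neg (by intro h; apply hi; simp [h])]
    omega
  linarith [hx this]

lemma diff_pos_add_one {x : Fin (n + 2) → ℝ} (hx : StrictMono x) {i : Fin (n + 2)}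
    (hi : i.val ≠ n + 1) : 0 < x (i + 1) - x i := by
  have : i < i + 1 := by
    rw [Fin.lt_def, Fin.val_add_one, if_neg (by simpa [Fin.ext_iff, Fin.last] using hi)]
    omega
  linarith [hx this]

lemma diff_pos_01 {x : Fin (n + 2) → ℝ} (hx : StrictMono x) : 0 < x 1 - x 0 := by
  have : (0 : Fin (n + 2)) < 1 := by
    rw [Fin.lt_def]
    simp [Fin.val_one]
  linarith [hx this]

lemma rballp_pos (hp : 0 < p) {x : Fin (n + 2) → ℝ} (hx : StrictMono x) (i : Fin (n + 2)) :
    0 < rballp p n x i := by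
  unfold rballp
  split_ifs with h0 h1
  · exact mul_pos (rpow_pos_of_pos two_pos _) (diff_pos_01 hx)
  · exact mul_pos (rpow_pos_of_pos two_pos _) (diff_pos_sub_one hx h0)
  · apply rpow_pos_of_pos
    have ha := rpow_pos_of_pos (diff_pos_sub_one hx h0) (-p)
    have hb := rpow_pos_of_pos (diff_pos_add_one hx h1) (-p)
    positivity

lemma rballp_diff (hp : 0 < p) {x : Fin (n + 2) → ℝ} (hx : StrictMono x) (i : Fin (n + 2)) :
    DifferentiableAt ℝ (fun y => rballp p n y i) x := by
  have hev : ∀ j : Fin (n + 2), DifferentiableAt ℝ (fun y : Fin (n + 2) → ℝ => y j) x :=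
    fun j => differentiableAt_apply j x
  unfold rballp
  split_ifs with h0 h1
  · exact (differentiableAt_const _).mul ((hev 1).sub (hev 0))
  · exact (differentiableAt_const _).mul ((hev i).sub (hev (i - 1)))
  · have ha : 0 < x i - x (i - 1) := diff_pos_sub_one hx h0
    have hb : 0 < x (i + 1) - x i := diff_pos_add_one hx h1
    have hA : DifferentiableAt ℝ (fun y : Fin (n + 2) → ℝ => (y i - y (i - 1)) ^ (-p)) x :=
      ((hev i).sub (hev (i - 1))).rpow_const (Or.inl (ne_of_gt ha))
    have hB : DifferentiableAt ℝ (fun y : Fin (n + 2) → ℝ => (y (i + 1) - y i) ^ (-p)) x :=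
      ((hev (i + 1)).sub (hev i)).rpow_const (Or.inl (ne_of_gt hb))
    have hbase : ((x i - x (i - 1)) ^ (-p) + (x (i + 1) - x i) ^ (-p)) / 2 ≠ 0 := by
      have ha' := rpow_pos_of_pos ha (-p)
      have hb' := rpow_pos_of_pos hb (-p)
      positivity
    have hS : DifferentiableAt ℝ
        (fun y : Fin (n + 2) → ℝ => ((y i - y (i - 1)) ^ (-p) + (y (i + 1) - y i) ^ (-p)) / 2) x :=
      by
        simp only [div_eq_mul_inv]
        exact (hA.add hB).mul_const (2 : ℝ)⁻¹
    exact hS.rpow_const (Or.inl hbase)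

lemma logRadiiSum_diffAt (hp : 0 < p) {x : Fin (n + 2) → ℝ} (hx : StrictMono x) :
    DifferentiableAt ℝ (logRadiiSum p n) x := by
  have : DifferentiableAt ℝ (fun y => ∑ i, Real.log (rballp p n y i)) x := by
    apply DifferentiableAt.fun_sum
    intro i _
    exact (rballp_diff hp hx i).log (ne_of_gt (rballp_pos hp hx i))
  exact this

lemma rballp_smul (hp : 0 < p) {x : Fin (n + 2) → ℝ} (hx : StrictMono x) {t : ℝ} (ht : 0 < t)
    (i : Fin (n + 2)) : rballp p n (t • x) i = t * rballp p n x i := by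
  have hp' : p ≠ 0 := ne_of_gt hp
  unfold rballp
  have hsm : ∀ j k : Fin (n + 2), (t • x) j - (t • x) k = t * (x j - x k) := by
    intro j k; simp [mul_sub]
  split_ifs with h0 h1
  · rw [hsm]; ring
  · rw [hsm]; ring
  · rw [hsm, hsm]
    have ha : 0 < x i - x (i - 1) := diff_pos_sub_one hx h0
    have hb : 0 < x (i + 1) - x i := diff_pos_add_one hx h1
    rw [mul_rpow ht.le ha.le, mul_rpow ht.le hb.le]
    have : (t ^ (-p) * (x i - x (i - 1)) ^ (-p) + t ^ (-p) * (x (i + 1) - x i) ^ (-p)) / 2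
        = t ^ (-p) * (((x i - x (i - 1)) ^ (-p) + (x (i + 1) - x i) ^ (-p)) / 2) := by ring
    rw [this, mul_rpow (rpow_pos_of_pos ht _).le (by positivity)]
    have ht1 : (t ^ (-p)) ^ (-1 / p) = t := by
      rw [← rpow_mul ht.le, show -p * (-1 / p) = 1 by field_simp, rpow_one]
    rw [ht1]

lemma logRadiiSum_smul (hp : 0 < p) {x : Fin (n + 2) → ℝ} (hx : StrictMono x) {t : ℝ}
    (ht : 0 < t) :
    logRadiiSum p n (t • x) = logRadiiSum p n x + ((n : ℝ) + 2) * Real.log t := by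
  unfold logRadiiSum
  have : ∀ i : Fin (n + 2), Real.log (rballp p n (t • x) i)
      = Real.log t + Real.log (rballp p n x i) := by
    intro i
    rw [rballp_smul hp hx ht i, Real.log_mul (ne_of_gt ht) (ne_of_gt (rballp_pos hp hx i))]
  rw [Finset.sum_congr rfl (fun i _ => this i), Finset.sum_add_distrib]
  simp [Finset.card_univ]
  ring

end aux

/-- for `p > 0` and `N ≥ 2`, the function `F(x) = Σᵢ log rᵢᵖ(x)` is
differentiable on the open set `U = {x : x₁ < ⋯ < x_N}` and satisfies the Euler identity
`Σᵢ xᵢ ∂F/∂xᵢ(x) = N` on `U`. -/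
theorem logRadiiSum_euler_identity (p : ℝ) (hp : 0 < p) (n : ℕ) :
    DifferentiableOn ℝ (logRadiiSum p n) {x : Fin (n + 2) → ℝ | StrictMono x} ∧
      ∀ x : Fin (n + 2) → ℝ, StrictMono x →
        ∑ i, x i * fderiv ℝ (logRadiiSum p n) x (Pi.single i 1) = (n : ℝ) + 2 := by
  constructor
  · intro x hx
    exact (logRadiiSum_diffAt hp hx).differentiableWithinAt
  · intro x hx
    set L := fderiv ℝ (logRadiiSum p n) x with hL
    have hF : HasFDerivAt (logRadiiSum p n) L x := (logRadiiSum_diffAt hp hx).hasFDerivAt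
    -- derivative of t ↦ t • x at 1
    have hsm : HasDerivAt (fun t : ℝ => t • x) x 1 := by
      simpa using (hasDerivAt_id (1 : ℝ)).smul_const x
    have hF1 : HasFDerivAt (logRadiiSum p n) L ((1 : ℝ) • x) := by rwa [one_smul]
    have hcomp : HasDerivAt (fun t : ℝ => logRadiiSum p n (t • x)) (L x) 1 :=
      hF1.comp_hasDerivAt (l := logRadiiSum p n) (f := fun t : ℝ => t • x) 1 hsm
    -- the other formula for the same function
    have hg : HasDerivAt (fun t : ℝ => logRadiiSum p n x + ((n : ℝ) + 2) * Real.log t)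
        ((n : ℝ) + 2) 1 := by
      have := ((Real.hasDerivAt_log one_ne_zero).const_mul ((n : ℝ) + 2)).const_add
        (logRadiiSum p n x)
      simpa using this
    have heq : (fun t : ℝ => logRadiiSum p n (t • x))
        =ᶠ[nhds 1] fun t : ℝ => logRadiiSum p n x + ((n : ℝ) + 2) * Real.log t := by
      filter_upwards [lt_mem_nhds (show (0:ℝ) < 1 by norm_num)] with t ht
      exact logRadiiSum_smul hp hx ht
    have hcomp' : HasDerivAt (fun t : ℝ => logRadiiSum p n (t • x)) ((n : ℝ) + 2) 1 :=
      hg.congr_of_eventuallyEq heq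
    have hLx : L x = (n : ℝ) + 2 := hcomp.unique hcomp'
    have hxsum : x = ∑ i, x i • (Pi.single i 1 : Fin (n + 2) → ℝ) := by
      funext j
      simp [Pi.single_apply, Finset.sum_apply, mul_ite]
    calc ∑ i, x i * L (Pi.single i 1) = L (∑ i, x i • (Pi.single i 1 : Fin (n + 2) → ℝ)) := by
          rw [map_sum]
          simp [smul_eq_mul]
      _ = L x := by rw [← hxsum]
      _ = (n : ℝ) + 2 := hLx
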